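/- Let K be a differential ring with derivation D, let a_0 = 1, a_1, ..., a_n ∈ K, and let u ∈ K be arbitrary. Define I_k := Σ_{j=0}^{k} C(k,j) * a_{k−j} * Q_j(−a_1) (so I_0 = 1 and I_1 = 0), and define the u-star-transformed coefficients a_k^{⋆u} := Σ_{m=0}^{k} C(k,m) * I_m * P_{k−m}(a_1 − u). Then for every y ∈ K one has Σ_{m=0}^{n} C(n,m) * I_m * ∇_u^{n−m}(y) = Σ_{k=0}^{n} C(n,k) * a_k^{⋆u} * D^{n−k}(y), where ∇_u(y) = D(y) + (a_1 − u)*y and ∇_u^m is the m-th iterate of ∇_u. -/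

import Mathlib

/-- Noncommutative Bell polynomials: `P 0 = 1`, `P (m+1) = D (P m) + u * P m`. -/
def bellP {K : Type*} [Ring K] (D : K → K) (u : K) : ℕ → K
  | 0 => 1
  | m + 1 => D (bellP D u m) + u * bellP D u m

/-- Covariant Bell polynomials relative to `c`:
`Q 0 = 1`, `Q (m+1) = Δ_c (Q m) + u * Q m` where `Δ_c b = D b + c*b - b*c`. -/
def qBell {K : Type*} [Ring K] (D : K → K) (c u : K) : ℕ → K
  | 0 => 1
  | m + 1 =>
      (D (qBell D c u m) + c * qBell D c u m - qBell D c u m * c)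
        + u * qBell D c u m

section Aux
variable {K : Type*} [Ring K] (D : K → K)

lemma myD_zero (hadd : ∀ a b : K, D (a + b) = D a + D b) : D 0 = 0 := by
  have h := hadd 0 0
  rw [add_zero] at h
  exact (left_eq_add.mp h)

lemma myD_sum (hadd : ∀ a b : K, D (a + b) = D a + D b) {α : Type*} (s : Finset α) (f : α → K) :
    D (∑ x ∈ s, f x) = ∑ x ∈ s, D (f x) := by
  classical
  induction s using Finset.induction with
  | empty => simpa using myD_zero D hadd
  | @insert a s h ih => rw [Finset.sum_insert h, hadd, ih, Finset.sum_insert h]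

lemma myD_nsmul (hadd : ∀ a b : K, D (a + b) = D a + D b) (n : ℕ) (x : K) :
    D (n • x) = n • D x := by
  induction n with
  | zero => simpa using myD_zero D hadd
  | succ n ih => rw [succ_nsmul, hadd, ih, succ_nsmul]

lemma nabla_pow (hadd : ∀ a b : K, D (a + b) = D a + D b)
    (hmul : ∀ a b : K, D (a * b) = D a * b + a * D b) (c y : K) (j : ℕ) :
    (fun z => D z + c * z)^[j] y
      = ∑ i ∈ Finset.range (j + 1), (j.choose i) • (bellP D c (j - i) * D^[i] y) := by
  induction j with
  | zero => simp [bellP]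
  | succ j ih =>
    rw [Function.iterate_succ_apply', ih]
    show D _ + c * _ = _
    rw [myD_sum D hadd, Finset.mul_sum, ← Finset.sum_add_distrib]
    have key : ∀ i ∈ Finset.range (j + 1),
        D ((j.choose i) • (bellP D c (j - i) * D^[i] y))
          + c * ((j.choose i) • (bellP D c (j - i) * D^[i] y))
        = (j.choose i) • (bellP D c (j - i + 1) * D^[i] y)
          + (j.choose i) • (bellP D c (j - i) * D^[i + 1] y) := by
      intro i hi
      rw [myD_nsmul D hadd, hmul, mul_smul_comm, ← smul_add, ← smul_add]
      congr 1
      rw [show bellP D c (j - i + 1) = D (bellP D c (j - i)) + c * bellP D c (j - i) from rfl,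
        show D^[i+1] y = D (D^[i] y) from (Function.iterate_succ_apply' D i y)]
      noncomm_ring
    rw [Finset.sum_congr rfl key, Finset.sum_add_distrib]
    rw [Finset.sum_range_succ' (fun i => ((j+1).choose i) • (bellP D c (j + 1 - i) * D^[i] y)) (j+1)]
    have e1 : ∀ i ∈ Finset.range (j + 1),
        ((j+1).choose (i+1)) • (bellP D c (j + 1 - (i+1)) * D^[i+1] y)
        = (j.choose i) • (bellP D c (j - i) * D^[i+1] y)
          + (j.choose (i+1)) • (bellP D c (j - i) * D^[i+1] y) := by
      intro i hi
      rw [Nat.succ_sub_succ, Nat.choose_succ_succ, add_smul]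
    rw [Finset.sum_congr rfl e1, Finset.sum_add_distrib]
    rw [Finset.sum_range_succ' (fun i => (j.choose i) • (bellP D c (j - i + 1) * D^[i] y)) j]
    have e2 : ∀ i ∈ Finset.range j,
        (j.choose (i+1)) • (bellP D c (j - (i+1) + 1) * D^[i+1] y)
        = (j.choose (i+1)) • (bellP D c (j - i) * D^[i+1] y) := by
      intro i hi
      simp only [Finset.mem_range] at hi
      have h : j - (i+1) + 1 = j - i := by omega
      rw [h]
    rw [Finset.sum_congr rfl e2]
    have e3 : ∑ i ∈ Finset.range (j+1), (j.choose (i+1)) • (bellP D c (j - i) * D^[i+1] y)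
        = ∑ i ∈ Finset.range j, (j.choose (i+1)) • (bellP D c (j - i) * D^[i+1] y) := by
      rw [Finset.sum_range_succ]
      simp
    rw [e3]
    simp only [Nat.choose_zero_right, one_smul, Nat.sub_zero, Function.iterate_zero, id_eq]
    abel

end Aux

/-- explicit coefficient formula for the `u⋆`-action. -/
theorem star_action_coefficients {K : Type*} [Ring K] (D : K → K)
    (hadd : ∀ a b : K, D (a + b) = D a + D b)
    (hmul : ∀ a b : K, D (a * b) = D a * b + a * D b)
    (n : ℕ) (a : ℕ → K) (ha0 : a 0 = 1) (u : K)
    (I : ℕ → K)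
    (hI : ∀ k, I k = ∑ j ∈ Finset.range (k + 1),
      (k.choose j : K) * a (k - j) * qBell D (a 1) (-(a 1)) j)
    (astar : ℕ → K)
    (hastar : ∀ k, astar k = ∑ m ∈ Finset.range (k + 1),
      (k.choose m : K) * I m * bellP D (a 1 - u) (k - m))
    (y : K) :
    ∑ m ∈ Finset.range (n + 1),
        (n.choose m : K) * I m * (fun z => D z + (a 1 - u) * z)^[n - m] y
      = ∑ k ∈ Finset.range (n + 1), (n.choose k : K) * astar k * D^[n - k] y := by
  set c : K := a 1 - u with hc
  simp only [hastar, nabla_pow D hadd hmul c y, Finset.mul_sum, Finset.sum_mul]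
  rw [Finset.sum_sigma', Finset.sum_sigma']
  refine Finset.sum_bij' (fun p _ => ⟨n - p.2, p.1⟩) (fun q _ => ⟨q.2, n - q.1⟩) ?_ ?_ ?_ ?_ ?_
  · rintro ⟨m, i⟩ hp
    simp only [Finset.mem_sigma, Finset.mem_range] at hp ⊢
    omega
  · rintro ⟨k, m⟩ hq
    simp only [Finset.mem_sigma, Finset.mem_range] at hq ⊢
    omega
  · rintro ⟨m, i⟩ hp
    simp only [Finset.mem_sigma, Finset.mem_range] at hp
    simp only [Sigma.mk.inj_iff, heq_eq_eq]
    exact ⟨trivial, by omega⟩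
  · rintro ⟨k, m⟩ hq
    simp only [Finset.mem_sigma, Finset.mem_range] at hq
    simp only [Sigma.mk.inj_iff, heq_eq_eq]
    exact ⟨by omega, trivial⟩
  · rintro ⟨m, i⟩ hp
    simp only [Finset.mem_sigma, Finset.mem_range] at hp
    have h1 : n - (n - i) = i := by omega
    have h2 : n - i - m = n - m - i := by omega
    have h3 : n.choose (n - i) = n.choose i := Nat.choose_symm (by omega)
    have h4 : n.choose i * (n - i).choose m = n.choose m * ((n - m).choose i) := by
      have h5 := Nat.choose_mul (n := n) (show m ≤ n - i by omega)
      rw [h3] at h5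
      rw [h5, h2]
      congr 1
      exact Nat.choose_symm (by omega)
    simp only [h1, h2, h3]
    simp only [← nsmul_eq_mul, smul_mul_assoc, mul_smul_comm, smul_smul, mul_assoc]
    rw [show (n-m).choose i * n.choose m = (n-i).choose m * n.choose i by
      rw [Nat.mul_comm, ← h4, Nat.mul_comm]]
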